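/- Let D = {z ∈ ℂ : |z| < 1} be the open unit disk and D_h = {z ∈ D : Im z > 0} the open upper half disk. Let ψ : D_h → D be a holomorphic bijection with holomorphic inverse g : D → D_h (so g is holomorphic on D, ψ(g(z)) = z for z ∈ D and g(ψ(w)) = w for w ∈ D_h). Let γ ∈ L²(D) and suppose there is a constant M such that |g′(z)| ≤ M for almost every z ∈ D with γ(z) ≠ 0. If ∫_D γ(z) ⟨∇(Im(g(z)^n)), ∇(Im(g(z)^k))⟩ dz = 0 for all integers n, k ≥ 1, then γ = 0 almost everywhere on D. In other words, a conductivity perturbation (vanishing near the inaccessible boundary region) is uniquely determined by the linearized incomplete Dirichlet-to-Neumann data generated by the harmonic functions Im(g(·)^n), which vanish on the part of the boundary outside the accessible arc. -/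

import Mathlib

open MeasureTheory Real
open scoped RealInnerProductSpace

open scoped RealInnerProductSpace ComplexConjugate Classical NNReal ENNReal

lemma hasGradientAt_im_comp {f : ℂ → ℂ} {z d : ℂ} (hf : HasDerivAt f d z) :
    HasGradientAt (fun w => (f w).im) (Complex.I * conj d) z := by
  rw [hasGradientAt_iff_hasFDerivAt]
  have h1 : HasFDerivAt (fun w => (f w).im)
      ((Complex.imCLM.comp ((ContinuousLinearMap.smulRight (1 : ℂ →L[ℂ] ℂ) d).restrictScalars ℝ)))
      z := Complex.imCLM.hasFDerivAt.comp z (hf.hasFDerivAt.restrictScalars ℝ)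
  refine h1.congr_fderiv (ContinuousLinearMap.ext fun v => ?_)
  simp [InnerProductSpace.toDual_apply_apply, Complex.inner, Complex.mul_re, Complex.mul_im]
  ring

lemma inner_grad_im (a b : ℂ) :
    ⟪Complex.I * conj a, Complex.I * conj b⟫ = (a * conj b).re := by
  rw [Complex.inner]
  have : conj (Complex.I * conj a) * (Complex.I * conj b) = a * conj b := by
    simp only [map_mul, Complex.conj_I, Complex.conj_conj]
    ring_nf
    rw [Complex.I_sq]
    ring
  rw [mul_comm (Complex.I * (starRingEnd ℂ) b), this]

lemma measurable_piecewise_of_continuousOn {α : Type*} [TopologicalSpace α] [MeasurableSpace α]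
    [BorelSpace α] {β : Type*} [TopologicalSpace β] [MeasurableSpace β] [BorelSpace β]
    {f : α → β} {U : Set α} (hU : IsOpen U) (hf : ContinuousOn f U) (c : β) :
    Measurable (fun z => if z ∈ U then f z else c) := by
  apply measurable_of_isOpen
  intro V hV
  have : (fun z => if z ∈ U then f z else c) ⁻¹' V
      = (U ∩ f ⁻¹' V) ∪ (Uᶜ ∩ (if c ∈ V then Set.univ else ∅)) := by
    ext z
    by_cases hz : z ∈ U <;> by_cases hc : c ∈ V <;> simp [hz, hc]
  rw [this]
  apply MeasurableSet.union
  · exact (hf.isOpen_inter_preimage hU hV).measurableSet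
  · exact (hU.isClosed_compl.measurableSet).inter (by split <;> simp)

lemma measurable_realSign : Measurable Real.sign := by
  unfold Real.sign
  exact Measurable.ite (measurableSet_lt measurable_id measurable_const)
    measurable_const (Measurable.ite (measurableSet_lt measurable_const measurable_id)
      measurable_const measurable_const)

lemma abs_realSign_le_one (x : ℝ) : |Real.sign x| ≤ 1 := by
  rcases lt_trichotomy x 0 with h | h | h
  · simp [Real.sign_of_neg h]
  · simp [h, Real.sign_zero]
  · simp [Real.sign_of_pos h]

lemma mul_realSign (x : ℝ) : x * Real.sign x = |x| := by
  rcases lt_trichotomy x 0 with h | h | h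
  · simp [Real.sign_of_neg h, abs_of_neg h]
  · simp [h]
  · simp [Real.sign_of_pos h, abs_of_pos h]

lemma Qmul (w : ℂ) (a b c d : ℕ) :
    (w^a * conj (w^b)).re * (w^c * conj (w^d)).re
      = (1/2) * (w^(a+c) * conj (w^(b+d))).re + (1/2) * (w^(a+d) * conj (w^(b+c))).re := by
  have h1 : w^(a+c) * conj (w^(b+d)) = (w^a * conj (w^b)) * (w^c * conj (w^d)) := by
    rw [pow_add, pow_add, map_mul]; ring
  have h2 : w^(a+d) * conj (w^(b+c)) = (w^a * conj (w^b)) * conj (w^c * conj (w^d)) := by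
    rw [pow_add, pow_add, map_mul, map_mul, Complex.conj_conj]; ring
  rw [h1, h2]
  set x := w^a * conj (w^b)
  set y := w^c * conj (w^d)
  simp only [Complex.mul_re, Complex.conj_re, Complex.conj_im]
  ring



/-- uniqueness for the linearized incomplete problem on the disk via a
conformal map. Let `ψ` be a holomorphic bijection from the upper half disk `D_h` onto
the unit disk `D` with holomorphic inverse `g : D → D_h`, and let `γ ∈ L²(D)` be such
that `|g'| ≤ M` a.e. on the support of `γ`. If
`∫_D γ ⟨∇Im(g^n), ∇Im(g^k)⟩ = 0` for all `n, k ≥ 1`, then `γ = 0` a.e. on `D`. -/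
theorem linearized_EIT_partial_boundary_uniqueness
    (ψ g : ℂ → ℂ)
    (hψ : DifferentiableOn ℂ ψ {z : ℂ | ‖z‖ < 1 ∧ 0 < z.im})
    (hψbij : Set.BijOn ψ {z : ℂ | ‖z‖ < 1 ∧ 0 < z.im} (Metric.ball (0:ℂ) 1))
    (hg : DifferentiableOn ℂ g (Metric.ball (0:ℂ) 1))
    (hgmaps : Set.MapsTo g (Metric.ball (0:ℂ) 1) {z : ℂ | ‖z‖ < 1 ∧ 0 < z.im})
    (hψg : ∀ z ∈ Metric.ball (0:ℂ) 1, ψ (g z) = z)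
    (hgψ : ∀ w ∈ {z : ℂ | ‖z‖ < 1 ∧ 0 < z.im}, g (ψ w) = w)
    (γ : ℂ → ℝ)
    (hγ : MemLp γ 2 (volume.restrict (Metric.ball (0:ℂ) 1)))
    (M : ℝ)
    (hM : ∀ᵐ z ∂(volume.restrict (Metric.ball (0:ℂ) 1)),
      γ z ≠ 0 → ‖deriv g z‖ ≤ M)
    (h : ∀ n k : ℕ, 1 ≤ n → 1 ≤ k →
      (∫ z in Metric.ball (0:ℂ) 1,
        γ z * ⟪gradient (fun w : ℂ => ((g w) ^ n).im) z,
               gradient (fun w : ℂ => ((g w) ^ k).im) z⟫) = 0) :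
    ∀ᵐ z ∂(volume.restrict (Metric.ball (0:ℂ) 1)), γ z = 0 := by
  have hBopen : IsOpen (Metric.ball (0:ℂ) 1) := Metric.isOpen_ball
  have hBm : MeasurableSet (Metric.ball (0:ℂ) 1) := hBopen.measurableSet
  set B := Metric.ball (0:ℂ) 1 with hBdef
  set Dh := {z : ℂ | ‖z‖ < 1 ∧ 0 < z.im} with hDhdef
  set μ := volume.restrict B with hμdef
  haveI : IsFiniteMeasure μ := by
    constructor
    rw [hμdef, Measure.restrict_apply_univ]
    exact measure_ball_lt_top
  have hDh_open : IsOpen Dh := by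
    rw [hDhdef, Set.setOf_and]
    exact (isOpen_lt (continuous_norm) continuous_const).inter
      (isOpen_lt continuous_const Complex.continuous_im)
  -- measurable representative of γ
  set γ' := hγ.1.mk γ with hγ'def
  have hγ'sm : StronglyMeasurable γ' := hγ.1.stronglyMeasurable_mk
  have hγγ' : γ =ᵐ[μ] γ' := hγ.1.ae_eq_mk
  have hγint : Integrable γ μ := hγ.integrable (by norm_num)
  have hγ'int : Integrable γ' μ := hγint.congr hγγ'
  -- the density h
  set h0 : ℂ → ℝ := fun z => γ' z * Complex.normSq (deriv g z) with hh0def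
  have hmeas : Measurable h0 := by
    exact hγ'sm.measurable.mul (Complex.continuous_normSq.measurable.comp (measurable_deriv g))
  -- integrability of h0
  set M' : ℝ := max M 0 with hM'def
  have hM'bd : ∀ᵐ z ∂μ, ‖h0 z‖ ≤ M' ^ 2 * |γ' z| := by
    filter_upwards [hM, hγγ'] with z hz hz'
    rw [hh0def]
    by_cases h0z : γ' z = 0
    · simp only [h0z, zero_mul, norm_zero]
      positivity
    · have hMz : ‖deriv g z‖ ≤ M' := le_trans (hz (by rw [hz']; exact h0z)) (le_max_left _ _)
      have : Complex.normSq (deriv g z) ≤ M' ^ 2 := by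
        rw [Complex.normSq_eq_norm_sq]
        exact pow_le_pow_left₀ (norm_nonneg _) hMz 2
      calc ‖γ' z * Complex.normSq (deriv g z)‖
          = |γ' z| * Complex.normSq (deriv g z) := by
            rw [Real.norm_eq_abs, abs_mul, abs_of_nonneg (Complex.normSq_nonneg _)]
        _ ≤ |γ' z| * M' ^ 2 := by
            exact mul_le_mul_of_nonneg_left this (abs_nonneg _)
        _ = M' ^ 2 * |γ' z| := by ring
  have hhint : Integrable h0 μ := by
    refine Integrable.mono' ((hγ'int.abs).const_mul (M' ^ 2)) hmeas.aestronglyMeasurable hM'bd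
  -- derivatives of g
  have hgc : ContinuousOn g B := hg.continuousOn
  have hgd : ∀ z ∈ B, HasDerivAt g (deriv g z) z := fun z hz =>
    (hg.differentiableAt (hBopen.mem_nhds hz)).hasDerivAt
  have hg'ne : ∀ z ∈ B, deriv g z ≠ 0 := by
    intro z hz
    have hgz : g z ∈ Dh := hgmaps hz
    have hψd : HasDerivAt ψ (deriv ψ (g z)) (g z) :=
      (hψ.differentiableAt (hDh_open.mem_nhds hgz)).hasDerivAt
    have h1 : HasDerivAt (fun w => ψ (g w)) (deriv ψ (g z) * deriv g z) z :=
      HasDerivAt.comp z hψd (hgd z hz)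
    have h2 : HasDerivAt (fun w => ψ (g w)) 1 z := by
      refine (hasDerivAt_id z).congr_of_eventuallyEq ?_
      filter_upwards [hBopen.mem_nhds hz] with w hw
      exact hψg w hw
    have := h1.unique h2
    intro hc
    rw [hc, mul_zero] at this
    exact zero_ne_one this
  -- the moments vanish
  have mom : ∀ a b : ℕ,
      (∫ z in B, h0 z * ((g z) ^ a * conj ((g z) ^ b)).re ∂volume) = 0 := by
    intro a b
    have hn := h (a+1) (b+1) (by omega) (by omega)
    have hcong : ∀ z ∈ B,
        γ z * ⟪gradient (fun w : ℂ => ((g w) ^ (a+1)).im) z,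
               gradient (fun w : ℂ => ((g w) ^ (b+1)).im) z⟫
        = ((a+1 : ℝ) * (b+1 : ℝ)) *
            (γ z * (Complex.normSq (deriv g z) * ((g z) ^ a * conj ((g z) ^ b)).re)) := by
      intro z hz
      have hd := hgd z hz
      have h1 : HasGradientAt (fun w : ℂ => ((g w) ^ (a+1)).im)
          (Complex.I * conj ((((a+1) : ℕ) : ℂ) * (g z) ^ a * deriv g z)) z := by
        have := hasGradientAt_im_comp (hd.pow (a+1))
        simpa using this
      have h2 : HasGradientAt (fun w : ℂ => ((g w) ^ (b+1)).im)
          (Complex.I * conj ((((b+1) : ℕ) : ℂ) * (g z) ^ b * deriv g z)) z := by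
        have := hasGradientAt_im_comp (hd.pow (b+1))
        simpa using this
      rw [h1.gradient, h2.gradient, inner_grad_im]
      have hre : ((((a+1) : ℕ) : ℂ) * (g z) ^ a * deriv g z)
          * conj ((((b+1) : ℕ) : ℂ) * (g z) ^ b * deriv g z)
          = ((((a+1 : ℝ) * (b+1 : ℝ) * Complex.normSq (deriv g z)) : ℝ) : ℂ)
              * ((g z) ^ a * conj ((g z) ^ b)) := by
        simp only [map_mul, Complex.conj_natCast]
        rw [Complex.ofReal_mul, Complex.ofReal_mul, ← Complex.mul_conj]
        push_cast
        ring
      rw [hre, Complex.re_ofReal_mul]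
      ring
    have e1 := setIntegral_congr_fun (μ := volume) hBm hcong
    rw [hn] at e1
    rw [integral_const_mul] at e1
    have e3 : (∫ z in B, γ z * (Complex.normSq (deriv g z) * ((g z) ^ a * conj ((g z) ^ b)).re) ∂volume)
        = ∫ z in B, h0 z * ((g z) ^ a * conj ((g z) ^ b)).re ∂volume := by
      refine integral_congr_ae ?_
      filter_upwards [hγγ'] with z hz
      rw [hz, hh0def]
      ring
    rw [e3] at e1
    have hpos : ((a+1 : ℝ) * (b+1 : ℝ)) ≠ 0 := by positivity
    have := e1.symm
    rcases mul_eq_zero.mp this with hc | hc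
    · exact absurd hc hpos
    · exact hc
  -- Stone-Weierstrass: test against all continuous functions
  have key : ∀ F : C(ℂ, ℝ), (∫ z in B, h0 z * F (g z) ∂volume) = 0 := by
    set K : Set ℂ := Metric.closedBall (0:ℂ) 1 ∩ {w : ℂ | 0 ≤ w.im} with hKdef
    have hKcomp : IsCompact K := (isCompact_closedBall _ _).inter_right
      (isClosed_le continuous_const Complex.continuous_im)
    haveI : CompactSpace ↥K := isCompact_iff_compactSpace.mp hKcomp
    have hgK : ∀ z ∈ B, g z ∈ K := by
      intro z hz
      have hm := hgmaps hz
      rw [hDhdef, Set.mem_setOf_eq] at hm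
      refine ⟨?_, le_of_lt hm.2⟩
      rw [Metric.mem_closedBall, Complex.dist_eq, sub_zero]
      exact le_of_lt hm.1
    set Xc : C(ℂ, ℝ) := ⟨fun w => w.re, Complex.continuous_re⟩ with hXc
    set Rc : C(ℂ, ℝ) := ⟨fun w => (w * conj w).re,
      Complex.continuous_re.comp (continuous_id.mul Complex.continuous_conj)⟩ with hRc
    set Qc : ℕ → ℕ → C(ℂ, ℝ) := fun a b =>
      ⟨fun w => (w ^ a * conj (w ^ b)).re,
        Complex.continuous_re.comp ((continuous_pow a).mul
          (Complex.continuous_conj.comp (continuous_pow b)))⟩ with hQc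
    set QS : Set C(ℂ, ℝ) := Set.range (fun p : ℕ × ℕ => Qc p.1 p.2) with hQS
    set V : Submodule ℝ C(ℂ, ℝ) := Submodule.span ℝ QS with hV
    have hQmem : ∀ a b, Qc a b ∈ V := fun a b => Submodule.subset_span ⟨(a, b), rfl⟩
    have hVone : (1 : C(ℂ, ℝ)) ∈ V := by
      have h1 : (1 : C(ℂ, ℝ)) = Qc 0 0 := by
        ext w; simp [hQc]
      rw [h1]; exact hQmem 0 0
    have hQy : ∀ a b : ℕ, ∀ y ∈ V, Qc a b * y ∈ V := by
      intro a b y hy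
      refine Submodule.span_induction ?_ ?_ ?_ ?_ hy
      · rintro q ⟨⟨c, d⟩, rfl⟩
        have h1 : Qc a b * Qc c d
            = (1/2 : ℝ) • Qc (a+c) (b+d) + (1/2 : ℝ) • Qc (a+d) (b+c) := by
          ext w
          simp only [ContinuousMap.mul_apply, ContinuousMap.add_apply,
            ContinuousMap.smul_apply, smul_eq_mul, hQc, ContinuousMap.coe_mk]
          exact Qmul w a b c d
        rw [h1]
        exact Submodule.add_mem _ (Submodule.smul_mem _ _ (hQmem _ _))
          (Submodule.smul_mem _ _ (hQmem _ _))
      · simp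
      · intro x y _ _ ihx ihy
        rw [mul_add]
        exact Submodule.add_mem _ ihx ihy
      · intro r x _ ih
        rw [mul_smul_comm]
        exact Submodule.smul_mem _ _ ih
    have hVmul : ∀ x y : C(ℂ, ℝ), x ∈ V → y ∈ V → x * y ∈ V := by
      intro x y hx hy
      refine Submodule.span_induction ?_ ?_ ?_ ?_ hx
      · rintro q ⟨⟨a, b⟩, rfl⟩
        exact hQy a b y hy
      · simp
      · intro u v _ _ ihu ihv
        rw [add_mul]
        exact Submodule.add_mem _ ihu ihv
      · intro r u _ ih
        rw [smul_mul_assoc]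
        exact Submodule.smul_mem _ _ ih
    set S : Subalgebra ℝ C(ℂ, ℝ) := V.toSubalgebra hVone hVmul with hS
    set A1 : Subalgebra ℝ C(ℂ, ℝ) := Algebra.adjoin ℝ {Xc, Rc} with hA1
    have hA1S : A1 ≤ S := by
      apply Algebra.adjoin_le
      intro p hp
      simp only [Set.mem_insert_iff, Set.mem_singleton_iff] at hp
      rcases hp with rfl | rfl
      · show Xc ∈ V
        have h1 : Xc = Qc 1 0 := by ext w; simp [hQc, hXc]
        rw [h1]; exact hQmem 1 0
      · show Rc ∈ V
        have h1 : Rc = Qc 1 1 := by ext w; simp [hQc, hRc]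
        rw [h1]; exact hQmem 1 1
    set ι : C(↥K, ℂ) := ⟨Subtype.val, continuous_subtype_val⟩ with hι
    set ρ : C(ℂ, ℝ) →ₐ[ℝ] C(↥K, ℝ) := ContinuousMap.compRightAlgHom ℝ ℝ ι with hρ
    set AK : Subalgebra ℝ C(↥K, ℝ) := A1.map ρ with hAK
    have hXmem : Xc ∈ A1 := Algebra.subset_adjoin (by simp)
    have hRmem : Rc ∈ A1 := Algebra.subset_adjoin (by simp)
    have hsep : AK.SeparatesPoints := by
      intro x y hxy
      by_cases hre : (x : ℂ).re = (y : ℂ).re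
      · refine ⟨⇑(ρ Rc), ⟨ρ Rc, Subalgebra.mem_map.mpr ⟨Rc, hRmem, rfl⟩, rfl⟩, ?_⟩
        have hx2 : 0 ≤ (x : ℂ).im := x.2.2
        have hy2 : 0 ≤ (y : ℂ).im := y.2.2
        have hvx : (ρ Rc) x = ((x : ℂ) * conj (x : ℂ)).re := rfl
        have hvy : (ρ Rc) y = ((y : ℂ) * conj (y : ℂ)).re := rfl
        rw [hvx, hvy]
        intro hc
        simp only [Complex.mul_re, Complex.conj_re, Complex.conj_im, mul_neg] at hc
        have h4 : (x : ℂ).re * (x : ℂ).re = (y : ℂ).re * (y : ℂ).re := by rw [hre]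
        have h3 : (x : ℂ).im * (x : ℂ).im = (y : ℂ).im * (y : ℂ).im := by linarith
        have him : (x : ℂ).im = (y : ℂ).im := by
          rcases mul_self_eq_mul_self_iff.mp h3 with h4 | h4
          · exact h4
          · linarith
        exact hxy (Subtype.ext (Complex.ext hre him))
      · refine ⟨⇑(ρ Xc), ⟨ρ Xc, Subalgebra.mem_map.mpr ⟨Xc, hXmem, rfl⟩, rfl⟩, ?_⟩
        exact fun hc => hre hc
    have hclos : AK.topologicalClosure = ⊤ :=
      ContinuousMap.subalgebra_topologicalClosure_eq_top_of_separatesPoints AK hsep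
    have hFint : ∀ F : C(ℂ, ℝ), Integrable (fun z => h0 z * F (g z)) μ := by
      intro F
      have hFm : AEStronglyMeasurable (fun z => F (g z)) μ :=
        (F.continuous.comp_continuousOn hgc).aestronglyMeasurable hBm
      have hFb : ∀ᵐ z ∂μ, ‖F (g z)‖ ≤ ‖ρ F‖ := by
        filter_upwards [ae_restrict_mem hBm] with z hz
        have h1 : F (g z) = (ρ F) ⟨g z, hgK z hz⟩ := rfl
        rw [h1]
        exact ContinuousMap.norm_coe_le_norm (ρ F) _
      exact (hhint.bdd_mul hFm hFb).congr (ae_of_all _ fun z => mul_comm _ _)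
    have hker : ∀ p : C(ℂ, ℝ), p ∈ V → (∫ z in B, h0 z * p (g z) ∂volume) = 0 := by
      intro p hp
      refine Submodule.span_induction ?_ ?_ ?_ ?_ hp
      · rintro q ⟨⟨a, b⟩, rfl⟩
        simpa [hQc] using mom a b
      · simp
      · intro x y hxV hyV ihx ihy
        have h1 : (∫ z in B, h0 z * (x + y) (g z) ∂volume)
            = (∫ z in B, (h0 z * x (g z) + h0 z * y (g z)) ∂volume) := by
          refine integral_congr_ae (ae_of_all _ fun z => ?_)
          simp [mul_add]
        rw [h1, integral_add (hFint x) (hFint y), ihx, ihy, add_zero]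
      · intro r x hxV ih
        have h1 : (∫ z in B, h0 z * (r • x) (g z) ∂volume)
            = (∫ z in B, r * (h0 z * x (g z)) ∂volume) := by
          refine integral_congr_ae (ae_of_all _ fun z => ?_)
          simp [smul_eq_mul]
          ring
        rw [h1, integral_const_mul, ih, mul_zero]
    intro F
    have hρFc : ρ F ∈ closure (AK : Set C(↥K, ℝ)) := by
      have h1 : ρ F ∈ AK.topologicalClosure := by rw [hclos]; exact Algebra.mem_top
      exact h1
    set I0 := ∫ z in B, h0 z * F (g z) ∂volume with hI0
    have hIabs : ∀ ε : ℝ, 0 < ε → |I0| ≤ ε * (1 + ∫ z in B, |h0 z| ∂volume) := by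
      intro ε hε
      obtain ⟨G, hGA, hGd⟩ := Metric.mem_closure_iff.mp hρFc ε hε
      obtain ⟨p, hpA1, rfl⟩ := Subalgebra.mem_map.mp hGA
      have hp0 : (∫ z in B, h0 z * p (g z) ∂volume) = 0 := hker p (hA1S hpA1)
      have hdist : ‖ρ F - ρ p‖ < ε := by
        rw [← dist_eq_norm]
        exact hGd
      have hptw : ∀ᵐ z ∂μ, ‖h0 z * F (g z) - h0 z * p (g z)‖ ≤ ε * |h0 z| := by
        filter_upwards [ae_restrict_mem hBm] with z hz
        have h1 : F (g z) - p (g z) = (ρ F - ρ p) ⟨g z, hgK z hz⟩ := by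
          simp only [ContinuousMap.sub_apply]
          rfl
        calc ‖h0 z * F (g z) - h0 z * p (g z)‖
            = |h0 z| * ‖(ρ F - ρ p) ⟨g z, hgK z hz⟩‖ := by
              rw [← h1, ← mul_sub]
              rw [Real.norm_eq_abs, Real.norm_eq_abs, abs_mul]
          _ ≤ |h0 z| * ‖ρ F - ρ p‖ := by
              exact mul_le_mul_of_nonneg_left
                (ContinuousMap.norm_coe_le_norm (ρ F - ρ p) _) (abs_nonneg _)
          _ ≤ ε * |h0 z| := by
              rw [mul_comm]
              exact mul_le_mul_of_nonneg_right hdist.le (abs_nonneg _)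
      have hnonneg : 0 ≤ ∫ z in B, |h0 z| ∂volume :=
        integral_nonneg fun z => abs_nonneg _
      calc |I0| = |I0 - (∫ z in B, h0 z * p (g z) ∂volume)| := by rw [hp0, sub_zero]
        _ = |∫ z in B, (h0 z * F (g z) - h0 z * p (g z)) ∂volume| := by
            rw [hI0, integral_sub (hFint F) (hFint p)]
        _ ≤ ∫ z in B, ‖h0 z * F (g z) - h0 z * p (g z)‖ ∂volume := by
            rw [← Real.norm_eq_abs]
            exact norm_integral_le_integral_norm _
        _ ≤ ∫ z in B, ε * |h0 z| ∂volume := by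
            refine integral_mono_ae (((hFint F).sub (hFint p)).norm) ((hhint.abs).const_mul ε) hptw
        _ = ε * ∫ z in B, |h0 z| ∂volume := integral_const_mul ε _
        _ ≤ ε * (1 + ∫ z in B, |h0 z| ∂volume) := by
            refine mul_le_mul_of_nonneg_left (by linarith) hε.le
    by_contra hne
    have hI : 0 < |I0| := abs_pos.mpr hne
    set C0 := 1 + ∫ z in B, |h0 z| ∂volume with hC0
    have hnonneg : 0 ≤ ∫ z in B, |h0 z| ∂volume := integral_nonneg fun z => abs_nonneg _
    have hCpos : 0 < C0 := by rw [hC0]; linarith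
    have h1 := hIabs (|I0| / (2 * C0)) (by positivity)
    have h2 : |I0| / (2 * C0) * C0 = |I0| / 2 := by field_simp
    rw [h2] at h1
    linarith
  -- conclude ∫ |h0| = 0 using approximation of sign
  have habs : (∫ z in B, |h0 z| ∂volume) = 0 := by
    set ψ0 : ℂ → ℂ := fun w => @ite _ (w ∈ Dh) (Classical.propDecidable _) (ψ w) 0 with hψ0
    have hψ0m : Measurable ψ0 := by
      rw [hψ0]
      exact measurable_piecewise_of_continuousOn hDh_open hψ.continuousOn 0
    set s : ℂ → ℝ := Set.indicator Dh (fun w => Real.sign (h0 (ψ0 w))) with hs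
    have hsm : Measurable s :=
      (measurable_realSign.comp (hmeas.comp hψ0m)).indicator hDh_open.measurableSet
    have hsg : ∀ z ∈ B, s (g z) = Real.sign (h0 z) := by
      intro z hz
      have hgz : g z ∈ Dh := hgmaps hz
      rw [hs, Set.indicator_of_mem hgz]
      have h1 : ψ0 (g z) = z := by
        rw [hψ0]
        simp only [hgz, if_pos]
        exact hψg z hz
      rw [h1]
    have hsb : ∀ w, |s w| ≤ 1 := by
      intro w
      rw [hs]
      by_cases hw : w ∈ Dh
      · rw [Set.indicator_of_mem hw]; exact abs_realSign_le_one _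
      · rw [Set.indicator_of_notMem hw]; simp
    set gm : ℂ → ℂ := fun z => if z ∈ B then g z else 0 with hgm
    have hgm_ae : gm =ᵐ[μ] g := by
      filter_upwards [ae_restrict_mem hBm] with z hz
      rw [hgm]; simp only [hz, if_pos]
    have hg_aem : AEMeasurable g μ := hgc.aemeasurable hBm
    have hgm_aem : AEMeasurable gm μ := hg_aem.congr hgm_ae.symm
    set d0 : ℂ → ℝ≥0 := fun z => ‖h0 z‖₊ with hd0
    have hd0m : Measurable d0 := hmeas.nnnorm
    set μ' : Measure ℂ := μ.withDensity (fun z => (d0 z : ENNReal)) with hμ'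
    haveI : IsFiniteMeasure μ' := by
      constructor
      rw [hμ', withDensity_apply _ MeasurableSet.univ, Measure.restrict_univ]
      exact hhint.2
    have hgm_aem' : AEMeasurable gm μ' := hgm_aem.mono_ac (withDensity_absolutelyContinuous _ _)
    set ν : Measure ℂ := μ'.map gm with hν
    haveI : IsFiniteMeasure ν := by
      constructor
      rw [hν, Measure.map_apply_of_aemeasurable hgm_aem' MeasurableSet.univ, Set.preimage_univ]
      exact measure_lt_top μ' _
    have hsint : Integrable s ν := by
      constructor
      · exact hsm.aestronglyMeasurable
      · exact HasFiniteIntegral.of_bounded (C := 1) (ae_of_all _ fun w => by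
          rw [Real.norm_eq_abs]; exact hsb w)
    have hsgaem : AEStronglyMeasurable (fun z => s (g z)) μ :=
      (hsm.comp_aemeasurable hg_aem).aestronglyMeasurable
    have hsg_int : Integrable (fun z => h0 z * s (g z)) μ := by
      refine (hhint.bdd_mul (c := 1) hsgaem (ae_of_all _ fun z => by
        rw [Real.norm_eq_abs]; exact hsb _)).congr (ae_of_all _ fun z => mul_comm _ _)
    have hmain : ∀ ε : ℝ, 0 < ε → (∫ z in B, |h0 z| ∂volume) ≤ ε := by
      intro ε hε
      obtain ⟨F, hFap, _⟩ := hsint.exists_boundedContinuous_integral_sub_le hε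
      have hFg_int : Integrable (fun z => h0 z * F (g z)) μ := by
        have hFgm : AEStronglyMeasurable (fun z => F (g z)) μ :=
          (F.continuous.comp_continuousOn hgc).aestronglyMeasurable hBm
        refine (hhint.bdd_mul (c := ‖F‖) hFgm (ae_of_all _ fun z =>
          F.norm_coe_le_norm (g z))).congr (ae_of_all _ fun z => mul_comm _ _)
      have e0 : (∫ z in B, h0 z * F (g z) ∂volume) = 0 := key F.toContinuousMap
      have ht1 : (∫ w, ‖s w - F w‖ ∂ν) = ∫ z in B, ‖h0 z‖ * ‖s (gm z) - F (gm z)‖ ∂volume := by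
        rw [hν]
        rw [integral_map (f := fun w => ‖s w - F w‖) hgm_aem' ((hsm.sub F.continuous.measurable).norm).aestronglyMeasurable]
        rw [hμ', integral_withDensity_eq_integral_smul hd0m]
        refine integral_congr_ae (ae_of_all _ fun z => ?_)
        rw [hd0]
        simp only [NNReal.smul_def, smul_eq_mul, coe_nnnorm]
      have habs1 : (∫ z in B, |h0 z| ∂volume) = ∫ z in B, h0 z * s (g z) ∂volume := by
        refine integral_congr_ae ?_
        filter_upwards [ae_restrict_mem hBm] with z hz
        rw [hsg z hz, mul_realSign]
      calc (∫ z in B, |h0 z| ∂volume)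
          = ∫ z in B, h0 z * s (g z) ∂volume := habs1
        _ = (∫ z in B, (h0 z * s (g z) - h0 z * F (g z)) ∂volume)
            + ∫ z in B, h0 z * F (g z) ∂volume := by
            rw [integral_sub hsg_int hFg_int]; ring
        _ = ∫ z in B, (h0 z * s (g z) - h0 z * F (g z)) ∂volume := by
            rw [e0, add_zero]
        _ ≤ |∫ z in B, (h0 z * s (g z) - h0 z * F (g z)) ∂volume| := le_abs_self _
        _ ≤ ∫ z in B, ‖h0 z * s (g z) - h0 z * F (g z)‖ ∂volume := by
            rw [← Real.norm_eq_abs]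
            exact norm_integral_le_integral_norm _
        _ = ∫ z in B, ‖h0 z‖ * ‖s (gm z) - F (gm z)‖ ∂volume := by
            refine integral_congr_ae ?_
            filter_upwards [hgm_ae] with z hz
            rw [hz, ← mul_sub, norm_mul]
        _ = ∫ w, ‖s w - F w‖ ∂ν := ht1.symm
        _ ≤ ε := hFap
    have hnonneg : 0 ≤ ∫ z in B, |h0 z| ∂volume := integral_nonneg fun z => abs_nonneg _
    by_contra hne
    have hpos : 0 < ∫ z in B, |h0 z| ∂volume := lt_of_le_of_ne hnonneg (Ne.symm hne)
    have := hmain ((∫ z in B, |h0 z| ∂volume) / 2) (by linarith)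
    linarith
  -- conclude γ = 0 a.e.
  have hh0zero : ∀ᵐ z ∂μ, h0 z = 0 := by
    have h1 : ∀ᵐ z ∂μ, 0 ≤ |h0 z| := ae_of_all _ fun z => abs_nonneg _
    have := (integral_eq_zero_iff_of_nonneg_ae h1 hhint.abs).mp habs
    filter_upwards [this] with z hz
    simpa using hz
  filter_upwards [hh0zero, hγγ', ae_restrict_mem hBm] with z hz hz' hzB
  rw [hz']
  rw [hh0def] at hz
  simp only at hz
  rcases mul_eq_zero.mp hz with h1 | h1
  · exact h1
  · exact absurd h1 (fun hc => (hg'ne z hzB) (Complex.normSq_eq_zero.mp hc))
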